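/- For pairwise distinct quaternions A, B, C, the tangent-vector transport identity (C−B) · (V(A,B,C))⁻¹ · (C−B) = V(B,C,A) holds, where V(A,B,C) = (C−B)(C−A)⁻¹(B−A); that is, reflecting the tangent vector at B in the chord from B to C yields the tangent vector at C of the same oriented circle. -/

import Mathlib

/-- Tangent vector at `B` of the oriented circle through `A`, `B`, `C`. -/
noncomputable def tangentVector (A B C : Quaternion ℝ) : Quaternion ℝ :=
  (C - B) * (C - A)⁻¹ * (B - A)

theorem tangentVector_transport
    (A B C : Quaternion ℝ) (hAB : A ≠ B) (hAC : A ≠ C) (hBC : B ≠ C) :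
    (C - B) * (tangentVector A B C)⁻¹ * (C - B) = tangentVector B C A := by
  have hx : C - B ≠ 0 := sub_ne_zero.mpr (Ne.symm hBC)
  have hy : B - A ≠ 0 := sub_ne_zero.mpr (Ne.symm hAB)
  have hz : C - A ≠ 0 := sub_ne_zero.mpr (Ne.symm hAC)
  have hsum : C - A = (C - B) + (B - A) := by abel
  rw [tangentVector, tangentVector, mul_inv_rev, mul_inv_rev, inv_inv]
  -- LHS: (C-B) * ((B-A)⁻¹ * ((C-A) * (C-B)⁻¹)) * (C-B)
  have key : ∀ x y : Quaternion ℝ, x ≠ 0 → y ≠ 0 →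
      x * (y⁻¹ * ((x + y) * x⁻¹)) * x = (x + y) * y⁻¹ * x := by
    intro x y hx hy
    simp only [mul_assoc, inv_mul_cancel₀ hx, inv_mul_cancel₀ hy, mul_one, add_mul, mul_add,
      mul_inv_cancel_left₀ hy]
  have : (A - C) * (A - B)⁻¹ = (C - A) * (B - A)⁻¹ := by
    rw [show A - C = -(C - A) by abel, show A - B = -(B - A) by abel, inv_neg,
      neg_mul_neg]
  rw [this, hsum, key _ _ hx hy]
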